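/- Let T : ℕ → ℝ≥0 satisfy T(N) ≤ c·sqrt(N/r(N))·T(r(N)) for all N > N₀, where r(N) = ⌈(log₂ N)²⌉, and T(N) ≤ c for N ≤ N₀. Then there exists a constant d > 1 such that T(N) ≤ sqrt(N)·d^{log*(N)} for all N ≥ 2, where log*(N) = min{i ≥ 0 : log₂^{(i)}(N) ≤ 1} is the iterated logarithm. -/

import Mathlib

/-- The `i`-fold iterated base-2 logarithm. -/
noncomputable def iterLog : ℕ → ℝ → ℝ
  | 0, x => x
  | (i + 1), x => Real.logb 2 (iterLog i x)

/-- The iterated logarithm `log*`. -/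
noncomputable def logStar (N : ℕ) : ℕ := sInf {i : ℕ | iterLog i (N : ℝ) ≤ 1}

namespace StarAux

noncomputable def L (x : ℝ) : ℕ := sInf {i : ℕ | iterLog i x ≤ 1}

lemma iterLog_succ' (i : ℕ) (x : ℝ) : iterLog (i + 1) x = iterLog i (Real.logb 2 x) := by
  induction i generalizing x with
  | zero => rfl
  | succ n ih =>
    show Real.logb 2 (iterLog (n + 1) x) = iterLog (n + 1) (Real.logb 2 x)
    rw [ih]
    rfl

lemma exists_aux : ∀ n : ℕ, ∀ x : ℝ, x ≤ 2 ^ n → ∃ i, iterLog i x ≤ 1 := by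
  intro n
  induction n with
  | zero => intro x hx; exact ⟨0, by simpa [iterLog] using hx⟩
  | succ n ih =>
    intro x hx
    rcases le_or_gt x 1 with h | h
    · exact ⟨0, h⟩
    · have hlog : Real.logb 2 x ≤ (2 : ℝ) ^ n := by
        have h1 : Real.logb 2 x ≤ Real.logb 2 ((2 : ℝ) ^ (n + 1)) :=
          Real.logb_le_logb_of_le one_lt_two (by linarith) hx
        have h2 : Real.logb 2 ((2 : ℝ) ^ (n + 1)) = (n + 1 : ℝ) := by
          rw [Real.logb_pow, Real.logb_self_eq_one one_lt_two]
          push_cast; ring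
        have h3 : ((n : ℝ) + 1) ≤ (2 : ℝ) ^ n := by
          exact_mod_cast (Nat.lt_two_pow_self (n := n))
        linarith [h1, h2.le, h2.ge]
      obtain ⟨i, hi⟩ := ih _ hlog
      exact ⟨i + 1, by rwa [iterLog_succ']⟩

lemma L_nonempty (x : ℝ) : {i : ℕ | iterLog i x ≤ 1}.Nonempty := by
  rcases le_or_gt x 1 with h | h
  · exact ⟨0, h⟩
  · obtain ⟨i, hi⟩ := exists_aux ⌈x⌉₊ x (by
      calc x ≤ (⌈x⌉₊ : ℝ) := Nat.le_ceil x
        _ ≤ 2 ^ ⌈x⌉₊ := by exact_mod_cast (Nat.lt_two_pow_self (n := ⌈x⌉₊)).le)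
    exact ⟨i, hi⟩

lemma iterLog_L (x : ℝ) : iterLog (L x) x ≤ 1 := Nat.sInf_mem (L_nonempty x)

lemma L_le {x : ℝ} {i : ℕ} (h : iterLog i x ≤ 1) : L x ≤ i := Nat.sInf_le h

lemma L_zero {x : ℝ} (h : x ≤ 1) : L x = 0 := Nat.sInf_eq_zero.mpr (Or.inl h)

lemma L_pos {x : ℝ} (h : 1 < x) : 1 ≤ L x := by
  by_contra h0
  push_neg at h0
  interval_cases hL : L x
  · have := iterLog_L x
    rw [hL] at this
    exact absurd this (by simpa [iterLog] using h)

lemma L_succ {x : ℝ} (h : 1 < x) : L x = L (Real.logb 2 x) + 1 := by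
  apply le_antisymm
  · apply L_le
    rw [iterLog_succ']
    exact iterLog_L _
  · have h1 : 1 ≤ L x := L_pos h
    have h2 : iterLog (L x - 1 + 1) x ≤ 1 := by
      rw [Nat.sub_add_cancel h1]; exact iterLog_L x
    rw [iterLog_succ'] at h2
    have := L_le h2
    omega

lemma L_mono_aux : ∀ n : ℕ, ∀ x y : ℝ, x ≤ y → L y ≤ n → L x ≤ n := by
  intro n
  induction n with
  | zero =>
    intro x y hxy hy
    rcases le_or_gt x 1 with h | h
    · simp [L_zero h]
    · have h2 : 1 < y := lt_of_lt_of_le h hxy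
      rw [L_succ h2] at hy
      omega
  | succ n ih =>
    intro x y hxy hy
    rcases le_or_gt x 1 with h | h
    · simp [L_zero h]
    · have h2 : 1 < y := lt_of_lt_of_le h hxy
      rw [L_succ h2] at hy
      rw [L_succ h]
      have hmono : Real.logb 2 x ≤ Real.logb 2 y :=
        Real.logb_le_logb_of_le one_lt_two (by linarith) hxy
      have := ih _ _ hmono (by omega)
      omega

lemma L_mono {x y : ℝ} (h : x ≤ y) : L x ≤ L y := L_mono_aux (L y) x y h le_rfl

lemma logb_le_three_sqrt {x : ℝ} (hx : 1 ≤ x) :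
    Real.logb 2 x ≤ 3 * (Real.sqrt x - 1) := by
  have hs : 0 < Real.sqrt x := Real.sqrt_pos.mpr (by linarith)
  have hs1 : 1 ≤ Real.sqrt x := by
    have := Real.sqrt_le_sqrt hx
    simpa using this
  have h1 : Real.log (Real.sqrt x) ≤ Real.sqrt x - 1 := Real.log_le_sub_one_of_pos hs
  have h2 : Real.log x = 2 * Real.log (Real.sqrt x) := by
    rw [Real.log_sqrt (by linarith : (0:ℝ) ≤ x)]; ring
  have hl2 : (0.6931471803 : ℝ) < Real.log 2 := Real.log_two_gt_d9
  have hlx : 0 ≤ Real.log x := Real.log_nonneg hx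
  rw [Real.logb, div_le_iff₀ (by linarith)]
  nlinarith [h1, h2, hl2, hs1, hlx]

lemma chainnum {m k t : ℕ} (hm : 1 ≤ m) (h : m ^ 64 ≤ 2 ^ k) (h2 : k ^ 2 ≤ 4096 * t) :
    (Real.logb 2 (m : ℝ)) ^ 2 ≤ (t : ℝ) := by
  have hmp : (0 : ℝ) < (m : ℝ) := by exact_mod_cast hm
  have h1 : ((m : ℝ)) ^ (64 : ℕ) ≤ (2 : ℝ) ^ k := by exact_mod_cast h
  have hmono : Real.logb 2 ((m : ℝ) ^ (64 : ℕ)) ≤ Real.logb 2 ((2 : ℝ) ^ k) :=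
    Real.logb_le_logb_of_le one_lt_two (by positivity) h1
  rw [Real.logb_pow, Real.logb_pow, Real.logb_self_eq_one one_lt_two] at hmono
  have hnn : 0 ≤ Real.logb 2 (m : ℝ) := Real.logb_nonneg one_lt_two (by exact_mod_cast hm)
  have hk : (k : ℝ) ^ 2 ≤ 4096 * (t : ℝ) := by exact_mod_cast h2
  have hL : Real.logb 2 (m : ℝ) ≤ (k : ℝ) / 64 := by push_cast at hmono; linarith
  have hsq := pow_le_pow_left₀ hnn hL 2
  have : ((k : ℝ) / 64) ^ 2 = (k : ℝ) ^ 2 / 4096 := by ring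
  linarith [hsq, this.le, this.ge]

set_option maxRecDepth 8000 in
lemma nineteen : (18 : ℝ) < (Real.logb 2 (19 : ℝ)) ^ 2 := by
  have h1 : ((2 : ℝ)) ^ (1087 : ℕ) ≤ (19 : ℝ) ^ (256 : ℕ) := by
    exact_mod_cast (show (2 : ℕ) ^ 1087 ≤ 19 ^ 256 by decide)
  have hmono : Real.logb 2 ((2 : ℝ) ^ (1087 : ℕ)) ≤ Real.logb 2 ((19 : ℝ) ^ (256 : ℕ)) :=
    Real.logb_le_logb_of_le one_lt_two (by positivity) h1
  rw [Real.logb_pow, Real.logb_pow, Real.logb_self_eq_one one_lt_two] at hmono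
  push_cast at hmono
  nlinarith [hmono, sq_nonneg (256 * Real.logb 2 19 - 1087)]

lemma sqrt_div_mul {x y : ℝ} (hx : 0 ≤ x) (hy : 0 < y) :
    Real.sqrt (x / y) * Real.sqrt y = Real.sqrt x := by
  rw [← Real.sqrt_mul (by positivity), div_mul_cancel₀ _ (ne_of_gt hy)]

lemma logb_two_two : Real.logb 2 2 = 1 := Real.logb_self_eq_one one_lt_two

lemma key {N : ℕ} (hN : 2 ^ (2 ^ 36) < N) :
    L ((⌈(Real.logb 2 ((⌈(Real.logb 2 (N : ℝ)) ^ 2⌉₊ : ℕ) : ℝ)) ^ 2⌉₊ : ℕ) : ℝ) + 1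
      ≤ L (N : ℝ) := by
  set a := Real.logb 2 (N : ℝ) with ha_def
  have hKcast : ((2 ^ (2 ^ 36) : ℕ) : ℝ) = (2 : ℝ) ^ ((2 : ℕ) ^ 36) := by
    rw [Nat.cast_pow, Nat.cast_ofNat]
  have hKpos : (0 : ℝ) < ((2 ^ (2 ^ 36) : ℕ) : ℝ) := by
    rw [hKcast]; exact pow_pos two_pos _
  have hKN : ((2 ^ (2 ^ 36) : ℕ) : ℝ) ≤ (N : ℝ) := Nat.cast_le.mpr hN.le
  have hK1 : (2 : ℝ) ≤ ((2 ^ (2 ^ 36) : ℕ) : ℝ) := by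
    rw [hKcast]
    calc (2 : ℝ) = 2 ^ (1 : ℕ) := (pow_one 2).symm
      _ ≤ (2 : ℝ) ^ ((2 : ℕ) ^ 36) := pow_le_pow_right₀ one_le_two (by norm_num)
  have hN1 : (1 : ℝ) < (N : ℝ) :=
    lt_of_lt_of_le (lt_of_lt_of_le one_lt_two hK1) hKN
  have hNpos : (0 : ℝ) < (N : ℝ) := lt_trans one_pos hN1
  have ha : (((2 : ℕ) ^ 36 : ℕ) : ℝ) ≤ a := by
    have h1 : Real.logb 2 ((2 ^ (2 ^ 36) : ℕ) : ℝ) ≤ a :=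
      Real.logb_le_logb_of_le one_lt_two hKpos hKN
    rwa [hKcast, Real.logb_pow, logb_two_two, mul_one] at h1
  clear hN hKcast hKpos hKN hK1
  have ha36 : ((36 : ℕ) : ℝ) ≤ (((2 : ℕ) ^ 36 : ℕ) : ℝ) := by
    have : (36 : ℕ) ≤ 2 ^ 36 := by norm_num
    exact_mod_cast this
  have ha1' : (1 : ℝ) < a := by
    have : ((36 : ℕ) : ℝ) = (36 : ℝ) := by norm_num
    nlinarith [ha, ha36]
  have ha1 : (1 : ℝ) ≤ a := ha1'.le
  set cx := Real.logb 2 a with hcx_def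
  have hc : (36 : ℝ) ≤ cx := by
    have h1 : Real.logb 2 ((((2 : ℕ) ^ 36 : ℕ)) : ℝ) ≤ cx :=
      Real.logb_le_logb_of_le one_lt_two (by positivity) ha
    have h2 : ((((2 : ℕ) ^ 36 : ℕ)) : ℝ) = (2 : ℝ) ^ (36 : ℕ) := by push_cast; ring
    rw [h2, Real.logb_pow, logb_two_two, mul_one] at h1
    exact_mod_cast h1
  set r1 := ⌈a ^ 2⌉₊ with hr1_def
  have hr1le : ((r1 : ℕ) : ℝ) ≤ 2 * a ^ 2 := by
    have h1 := Nat.ceil_lt_add_one (show (0 : ℝ) ≤ a ^ 2 by positivity)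
    nlinarith [ha1]
  have hr1ge : (1 : ℝ) ≤ ((r1 : ℕ) : ℝ) := by
    have : 1 ≤ r1 := Nat.one_le_ceil_iff.mpr (by nlinarith [ha1])
    exact_mod_cast this
  set b := Real.logb 2 ((r1 : ℕ) : ℝ) with hb_def
  have hbnn : 0 ≤ b := Real.logb_nonneg one_lt_two hr1ge
  have hble : b ≤ 1 + 2 * cx := by
    have h1 : b ≤ Real.logb 2 (2 * a ^ 2) :=
      Real.logb_le_logb_of_le one_lt_two (by linarith) hr1le
    have h2 : Real.logb 2 (2 * a ^ 2) = 1 + 2 * cx := by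
      rw [Real.logb_mul (by norm_num) (by positivity), Real.logb_pow, logb_two_two]
      push_cast; ring
    linarith
  set r2 := ⌈b ^ 2⌉₊ with hr2_def
  have hr2le : ((r2 : ℕ) : ℝ) ≤ 2 * (1 + 2 * cx) ^ 2 := by
    have h1 : b ^ 2 ≤ (1 + 2 * cx) ^ 2 := pow_le_pow_left₀ hbnn hble 2
    have h2 := Nat.ceil_lt_add_one (show (0 : ℝ) ≤ b ^ 2 by positivity)
    nlinarith [hc]
  -- logb of the bound is at most cx
  have hcv : Real.logb 2 (2 * (1 + 2 * cx) ^ 2) ≤ cx := by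
    have e1 : Real.logb 2 (2 * (1 + 2 * cx) ^ 2)
        = 1 + 2 * Real.logb 2 (1 + 2 * cx) := by
      rw [Real.logb_mul (by norm_num) (by positivity), Real.logb_pow, logb_two_two]
      push_cast; ring
    have e2 : Real.logb 2 (1 + 2 * cx) ≤ Real.logb 2 (4 * cx) :=
      Real.logb_le_logb_of_le one_lt_two (by linarith) (by linarith)
    have e3 : Real.logb 2 (4 * cx) = 2 + Real.logb 2 cx := by
      rw [Real.logb_mul (by norm_num) (by linarith),
        show (4 : ℝ) = (2 : ℝ) ^ (2 : ℕ) by norm_num, Real.logb_pow, logb_two_two]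
      push_cast; ring
    have e4 : Real.logb 2 cx ≤ 3 * (Real.sqrt cx - 1) :=
      logb_le_three_sqrt (by linarith)
    have e5 : (6 : ℝ) ≤ Real.sqrt cx := by
      have h1 : Real.sqrt 36 ≤ Real.sqrt cx := Real.sqrt_le_sqrt hc
      have h2 : Real.sqrt 36 = 6 := by
        rw [show (36 : ℝ) = 6 ^ 2 by norm_num, Real.sqrt_sq (by norm_num)]
      linarith
    have e6 : Real.sqrt cx ^ 2 = cx := Real.sq_sqrt (by linarith)
    nlinarith [e1, e2, e3, e4, e5, e6]
  have hLr2 : L ((r2 : ℕ) : ℝ) ≤ 1 + L cx := by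
    have h1 : L ((r2 : ℕ) : ℝ) ≤ L (2 * (1 + 2 * cx) ^ 2) := L_mono hr2le
    have h2 : L (2 * (1 + 2 * cx) ^ 2) = L (Real.logb 2 (2 * (1 + 2 * cx) ^ 2)) + 1 :=
      L_succ (by nlinarith [hc])
    have h3 : L (Real.logb 2 (2 * (1 + 2 * cx) ^ 2)) ≤ L cx := L_mono hcv
    omega
  have hLN : L (N : ℝ) = L cx + 2 := by
    have h1 : L (N : ℝ) = L a + 1 := L_succ hN1
    have h2 : L a = L cx + 1 := L_succ ha1'
    omega
  omega

lemma exists_K : ∃ K : ℕ,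
    ((Real.logb 2 (K : ℝ)) ^ 2 ≤ ((2 ^ 72 : ℕ) : ℝ)) ∧
    ∀ N : ℕ, K < N →
      L ((⌈(Real.logb 2 ((⌈(Real.logb 2 (N : ℝ)) ^ 2⌉₊ : ℕ) : ℝ)) ^ 2⌉₊ : ℕ) : ℝ) + 1
        ≤ L (N : ℝ) := by
  refine ⟨2 ^ (2 ^ 36), ?_, fun N hN => key hN⟩
  rw [Nat.cast_pow, Nat.cast_ofNat, Real.logb_pow, logb_two_two]
  push_cast
  norm_num

lemma one_le_logb {M : ℕ} (hM : 2 ≤ M) : 1 ≤ Real.logb 2 (M : ℝ) := by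
  have h1 : Real.logb 2 (2 : ℝ) ≤ Real.logb 2 (M : ℝ) :=
    Real.logb_le_logb_of_le one_lt_two two_pos (by exact_mod_cast hM)
  rwa [logb_two_two] at h1

lemma ceil_sq_pos {M : ℕ} (hM : 2 ≤ M) : 1 ≤ ⌈(Real.logb 2 (M : ℝ)) ^ 2⌉₊ :=
  Nat.one_le_ceil_iff.mpr (by nlinarith [one_le_logb hM])

lemma sqrt_one_le {M : ℕ} (hM : 1 ≤ M) : (1 : ℝ) ≤ Real.sqrt M := by
  have h0 : ((1 : ℕ) : ℝ) ≤ (M : ℝ) := by exact_mod_cast hM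
  have := Real.sqrt_le_sqrt h0
  simpa using this

end StarAux

theorem stmt_5 (c : ℝ) (N₀ : ℕ) (T : ℕ → NNReal)
    (hc : 0 < c) (hN₀ : 2 ≤ N₀)
    (hrlt : ∀ N : ℕ, N₀ < N → ⌈(Real.logb 2 N) ^ 2⌉₊ < N)
    (hrec : ∀ N : ℕ, N₀ < N →
      (T N : ℝ) ≤ c * Real.sqrt ((N : ℝ) / (⌈(Real.logb 2 N) ^ 2⌉₊ : ℝ)) *
        (T ⌈(Real.logb 2 N) ^ 2⌉₊ : ℝ))
    (hbase : ∀ N : ℕ, N ≤ N₀ → (T N : ℝ) ≤ c) :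
    ∃ d : ℝ, 1 < d ∧ ∀ N : ℕ, 2 ≤ N →
      (T N : ℝ) ≤ Real.sqrt (N : ℝ) * d ^ logStar N := by
  obtain ⟨K, cK, hkeyK⟩ := StarAux.exists_K
  set cc := max c 2 with hcc_def
  have hccc : c ≤ cc := le_max_left c 2
  have hcc2 : (2 : ℝ) ≤ cc := le_max_right c 2
  have hcc1 : (1 : ℝ) ≤ cc := by linarith
  have hpow : ∀ n : ℕ, (1 : ℝ) ≤ cc ^ n := by
    intro n
    have := pow_le_pow_right₀ hcc1 (Nat.zero_le n)
    simpa using this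
  -- N₀ is forced to be at least 19
  have h19 : 19 ≤ N₀ := by
    by_contra hlt
    push_neg at hlt
    have h1 := hrlt 19 (by omega)
    have h3 : ((18 : ℕ) : ℝ) < (Real.logb 2 ((19 : ℕ) : ℝ)) ^ 2 := by
      push_cast
      exact StarAux.nineteen
    have h2 := Nat.lt_ceil.mpr h3
    omega
  -- base bound below N₀
  have hbase' : ∀ (M n : ℕ), 1 ≤ M → M ≤ N₀ → (T M : ℝ) ≤ cc ^ (n + 1) * Real.sqrt M := by
    intro M n hM1 hMle
    have hb := hbase M hMle
    have hsq1 := StarAux.sqrt_one_le hM1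
    have h1 : c ≤ cc ^ (n + 1) := le_trans hccc (le_self_pow₀ hcc1 (by omega))
    nlinarith [hpow (n + 1), hsq1, hb, h1]
  -- chain step
  have Pstep : ∀ (j : ℕ) (mj mj1 : ℕ), ((Real.logb 2 (mj1 : ℝ)) ^ 2 ≤ (mj : ℝ)) →
      (∀ M : ℕ, 1 ≤ M → M ≤ mj → (T M : ℝ) ≤ cc ^ (j + 1) * Real.sqrt M) →
      (∀ M : ℕ, 1 ≤ M → M ≤ mj1 → (T M : ℝ) ≤ cc ^ (j + 2) * Real.sqrt M) := by
    intro j mj mj1 hnum IH M hM1 hMle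
    rcases le_or_gt M N₀ with hM0 | hM0
    · exact hbase' M (j + 1) hM1 hM0
    · have hrecM := hrec M hM0
      have hM2 : 2 ≤ M := by omega
      have hlogM := StarAux.one_le_logb hM2
      set r := ⌈(Real.logb 2 (M : ℝ)) ^ 2⌉₊ with hrdef
      have hr1 : 1 ≤ r := StarAux.ceil_sq_pos hM2
      have hrpos : (0 : ℝ) < (r : ℝ) := by exact_mod_cast hr1
      have hrle : r ≤ mj := by
        have hMpos : (0 : ℝ) < (M : ℝ) := by positivity
        have hmono : Real.logb 2 (M : ℝ) ≤ Real.logb 2 (mj1 : ℝ) :=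
          Real.logb_le_logb_of_le one_lt_two hMpos (by exact_mod_cast hMle)
        have h2 : (Real.logb 2 (M : ℝ)) ^ 2 ≤ (Real.logb 2 (mj1 : ℝ)) ^ 2 :=
          pow_le_pow_left₀ (by linarith) hmono 2
        exact Nat.ceil_le.mpr (le_trans h2 hnum)
      have hTr := IH r hr1 hrle
      have hs : Real.sqrt ((M : ℝ) / (r : ℝ)) * Real.sqrt (r : ℝ) = Real.sqrt (M : ℝ) :=
        StarAux.sqrt_div_mul (by positivity) hrpos
      have hstep : (T M : ℝ) ≤ c * Real.sqrt ((M : ℝ) / (r : ℝ)) * (cc ^ (j + 1) * Real.sqrt r) :=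
        le_trans hrecM (mul_le_mul_of_nonneg_left hTr (mul_nonneg hc.le (Real.sqrt_nonneg _)))
      have heq : c * Real.sqrt ((M : ℝ) / (r : ℝ)) * (cc ^ (j + 1) * Real.sqrt r)
          = c * cc ^ (j + 1) * (Real.sqrt ((M : ℝ) / r) * Real.sqrt r) := by ring
      rw [heq, hs] at hstep
      have hfin : c * cc ^ (j + 1) ≤ cc ^ (j + 2) := by
        have h1 : c * cc ^ (j + 1) ≤ cc * cc ^ (j + 1) :=
          mul_le_mul_of_nonneg_right hccc (le_trans zero_le_one (hpow (j + 1)))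
        have h2 : cc * cc ^ (j + 1) = cc ^ (j + 2) := by ring
        linarith
      exact le_trans hstep (mul_le_mul_of_nonneg_right hfin (Real.sqrt_nonneg _))
  -- the chain
  have P0 : ∀ M : ℕ, 1 ≤ M → M ≤ 19 → (T M : ℝ) ≤ cc ^ 1 * Real.sqrt M := by
    intro M hM1 hMle
    exact hbase' M 0 hM1 (le_trans hMle h19)
  have P1 := Pstep 0 19 20 (StarAux.chainnum (m := 20) (k := 277) (t := 19)
    (by norm_num) (by decide) (by norm_num)) P0
  have P2 := Pstep 1 20 21 (StarAux.chainnum (m := 21) (k := 282) (t := 20)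
    (by norm_num) (by decide) (by norm_num)) P1
  have P3 := Pstep 2 21 23 (StarAux.chainnum (m := 23) (k := 290) (t := 21)
    (by norm_num) (by decide) (by norm_num)) P2
  have P4 := Pstep 3 23 26 (StarAux.chainnum (m := 26) (k := 301) (t := 23)
    (by norm_num) (by decide) (by norm_num)) P3
  have P5 := Pstep 4 26 30 (StarAux.chainnum (m := 30) (k := 315) (t := 26)
    (by norm_num) (by decide) (by norm_num)) P4
  have P6 := Pstep 5 30 40 (StarAux.chainnum (m := 40) (k := 341) (t := 30)
    (by norm_num) (by decide) (by norm_num)) P5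
  have P7 := Pstep 6 40 60 (StarAux.chainnum (m := 60) (k := 379) (t := 40)
    (by norm_num) (by decide) (by norm_num)) P6
  have P8 := Pstep 7 60 160 (StarAux.chainnum (m := 160) (k := 469) (t := 60)
    (by norm_num) (by decide) (by norm_num)) P7
  have P9 := Pstep 8 160 5184 (StarAux.chainnum (m := 5184) (k := 790) (t := 160)
    (by norm_num) (by set_option maxRecDepth 10000 in decide) (by norm_num)) P8
  have c72 : (Real.logb 2 ((2 ^ 72 : ℕ) : ℝ)) ^ 2 ≤ ((5184 : ℕ) : ℝ) := by
    rw [Nat.cast_pow, Nat.cast_ofNat, Real.logb_pow, StarAux.logb_two_two]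
    norm_num
  have P10 := Pstep 9 5184 (2 ^ 72) c72 P9
  have P11 := Pstep 10 (2 ^ 72) K cK P10
  -- small-input bound
  have hsmall : ∀ M : ℕ, 1 ≤ M → M ≤ max N₀ K → (T M : ℝ) ≤ cc ^ 12 * Real.sqrt M := by
    intro M hM1 hMle
    rcases le_max_iff.mp hMle with h | h
    · exact hbase' M 11 hM1 h
    · exact P11 M hM1 h
  -- main strong induction
  have hmain : ∀ N : ℕ, 1 ≤ N →
      (T N : ℝ) ≤ cc ^ 13 * Real.sqrt N * ((cc ^ 2) ^ (StarAux.L (N : ℝ))) := by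
    intro N
    induction N using Nat.strong_induction_on with
    | _ N IH =>
    intro hN1
    have hpow2 : (1 : ℝ) ≤ (cc ^ 2) ^ (StarAux.L ((N : ℕ) : ℝ)) := by
      calc (1 : ℝ) = 1 ^ (StarAux.L ((N : ℕ) : ℝ)) := (one_pow _).symm
        _ ≤ (cc ^ 2) ^ (StarAux.L ((N : ℕ) : ℝ)) := pow_le_pow_left₀ zero_le_one (hpow 2) _
    rcases le_or_gt N (max N₀ K) with hsm | hbig
    · have h1 := hsmall N hN1 hsm
      have h3 : cc ^ 12 * Real.sqrt N ≤ cc ^ 13 * Real.sqrt N :=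
        mul_le_mul_of_nonneg_right (pow_le_pow_right₀ hcc1 (by omega)) (Real.sqrt_nonneg _)
      have h4 : cc ^ 13 * Real.sqrt N ≤ cc ^ 13 * Real.sqrt N * ((cc ^ 2) ^ (StarAux.L (N : ℝ))) :=
        le_mul_of_one_le_right
          (mul_nonneg (le_trans zero_le_one (hpow 13)) (Real.sqrt_nonneg _)) hpow2
      linarith
    · have hN₀lt : N₀ < N := lt_of_le_of_lt (le_max_left _ _) hbig
      have hKlt : K < N := lt_of_le_of_lt (le_max_right _ _) hbig
      have hN2 : 2 ≤ N := by omega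
      set r1 := ⌈(Real.logb 2 (N : ℝ)) ^ 2⌉₊ with hr1def
      have hrecN := hrec N hN₀lt
      have hr1lt := hrlt N hN₀lt
      have hr11 : 1 ≤ r1 := StarAux.ceil_sq_pos hN2
      have hr1pos : (0 : ℝ) < (r1 : ℝ) := by exact_mod_cast hr11
      have hs1 : Real.sqrt ((N : ℝ) / (r1 : ℝ)) * Real.sqrt (r1 : ℝ) = Real.sqrt (N : ℝ) :=
        StarAux.sqrt_div_mul (by positivity) hr1pos
      rcases le_or_gt r1 (max N₀ K) with hr1sm | hr1big
      · have hTr1 := hsmall r1 hr11 hr1sm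
        have hstep : (T N : ℝ) ≤ c * Real.sqrt ((N : ℝ) / (r1 : ℝ)) * (cc ^ 12 * Real.sqrt r1) :=
          le_trans hrecN (mul_le_mul_of_nonneg_left hTr1 (mul_nonneg hc.le (Real.sqrt_nonneg _)))
        have heq : c * Real.sqrt ((N : ℝ) / (r1 : ℝ)) * (cc ^ 12 * Real.sqrt r1)
            = c * cc ^ 12 * (Real.sqrt ((N : ℝ) / r1) * Real.sqrt r1) := by ring
        rw [heq, hs1] at hstep
        have h2 : c * cc ^ 12 ≤ cc ^ 13 := by
          have hh : c * cc ^ 12 ≤ cc * cc ^ 12 :=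
            mul_le_mul_of_nonneg_right hccc (le_trans zero_le_one (hpow 12))
          have hh2 : cc * cc ^ 12 = cc ^ 13 := by ring
          linarith
        calc (T N : ℝ) ≤ c * cc ^ 12 * Real.sqrt N := hstep
          _ ≤ cc ^ 13 * Real.sqrt N := mul_le_mul_of_nonneg_right h2 (Real.sqrt_nonneg _)
          _ ≤ cc ^ 13 * Real.sqrt N * ((cc ^ 2) ^ (StarAux.L (N : ℝ))) :=
            le_mul_of_one_le_right
              (mul_nonneg (le_trans zero_le_one (hpow 13)) (Real.sqrt_nonneg _)) hpow2
      · have hN₀r1 : N₀ < r1 := lt_of_le_of_lt (le_max_left _ _) hr1big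
        have hr12 : 2 ≤ r1 := by omega
        set r2 := ⌈(Real.logb 2 (r1 : ℝ)) ^ 2⌉₊ with hr2def
        have hrecr1 := hrec r1 hN₀r1
        have hr2lt := hrlt r1 hN₀r1
        have hr21 : 1 ≤ r2 := StarAux.ceil_sq_pos hr12
        have hr2pos : (0 : ℝ) < (r2 : ℝ) := by exact_mod_cast hr21
        have hTr2 := IH r2 (lt_trans hr2lt hr1lt) hr21
        have hkey : StarAux.L ((r2 : ℕ) : ℝ) + 1 ≤ StarAux.L ((N : ℕ) : ℝ) := by
          rw [hr2def, hr1def]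
          exact hkeyK N hKlt
        have hs2 : Real.sqrt ((r1 : ℝ) / (r2 : ℝ)) * Real.sqrt (r2 : ℝ) = Real.sqrt (r1 : ℝ) :=
          StarAux.sqrt_div_mul (by positivity) hr2pos
        have hstep1 : (T N : ℝ) ≤ c * Real.sqrt ((N : ℝ) / (r1 : ℝ)) *
            (c * Real.sqrt ((r1 : ℝ) / (r2 : ℝ)) * (T r2 : ℝ)) :=
          le_trans hrecN (mul_le_mul_of_nonneg_left hrecr1
            (mul_nonneg hc.le (Real.sqrt_nonneg _)))
        have hstep2 : (T N : ℝ) ≤ c * Real.sqrt ((N : ℝ) / (r1 : ℝ)) *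
            (c * Real.sqrt ((r1 : ℝ) / (r2 : ℝ)) *
              (cc ^ 13 * Real.sqrt r2 * ((cc ^ 2) ^ (StarAux.L (r2 : ℝ))))) :=
          le_trans hstep1 (mul_le_mul_of_nonneg_left
            (mul_le_mul_of_nonneg_left hTr2 (mul_nonneg hc.le (Real.sqrt_nonneg _)))
            (mul_nonneg hc.le (Real.sqrt_nonneg _)))
        have heq : c * Real.sqrt ((N : ℝ) / (r1 : ℝ)) *
            (c * Real.sqrt ((r1 : ℝ) / (r2 : ℝ)) *
              (cc ^ 13 * Real.sqrt r2 * ((cc ^ 2) ^ (StarAux.L (r2 : ℝ)))))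
            = (c * c) * cc ^ 13 * ((cc ^ 2) ^ (StarAux.L (r2 : ℝ))) *
              (Real.sqrt ((N : ℝ) / r1) * (Real.sqrt ((r1 : ℝ) / r2) * Real.sqrt r2)) := by
          ring
        rw [heq, hs2, hs1] at hstep2
        have hc2 : c * c ≤ cc ^ 2 := by nlinarith [hccc, hc]
        have hco : (c * c) * cc ^ 13 * ((cc ^ 2) ^ (StarAux.L (r2 : ℝ)))
            ≤ cc ^ 13 * ((cc ^ 2) ^ (StarAux.L (N : ℝ))) := by
          have hnn2 : (0 : ℝ) ≤ (cc ^ 2) ^ (StarAux.L (r2 : ℝ)) := by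
            calc (0:ℝ) ≤ 1 := zero_le_one
              _ ≤ (cc ^ 2) ^ (StarAux.L (r2 : ℝ)) := by
                calc (1 : ℝ) = 1 ^ (StarAux.L (r2 : ℝ)) := (one_pow _).symm
                  _ ≤ _ := pow_le_pow_left₀ zero_le_one (hpow 2) _
          have h1 : (c * c) * cc ^ 13 * ((cc ^ 2) ^ (StarAux.L (r2 : ℝ)))
              ≤ cc ^ 2 * cc ^ 13 * ((cc ^ 2) ^ (StarAux.L (r2 : ℝ))) :=
            mul_le_mul_of_nonneg_right
              (mul_le_mul_of_nonneg_right hc2 (le_trans zero_le_one (hpow 13))) hnn2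
          have h2 : cc ^ 2 * cc ^ 13 * ((cc ^ 2) ^ (StarAux.L (r2 : ℝ)))
              = cc ^ 13 * ((cc ^ 2) ^ (StarAux.L (r2 : ℝ) + 1)) := by ring
          have h3 : (cc ^ 2) ^ (StarAux.L (r2 : ℝ) + 1) ≤ (cc ^ 2) ^ (StarAux.L (N : ℝ)) :=
            pow_le_pow_right₀ (hpow 2) hkey
          have h4 : cc ^ 13 * ((cc ^ 2) ^ (StarAux.L (r2 : ℝ) + 1))
              ≤ cc ^ 13 * ((cc ^ 2) ^ (StarAux.L (N : ℝ))) :=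
            mul_le_mul_of_nonneg_left h3 (le_trans zero_le_one (hpow 13))
          linarith
        calc (T N : ℝ) ≤ (c * c) * cc ^ 13 * ((cc ^ 2) ^ (StarAux.L (r2 : ℝ))) * Real.sqrt N := hstep2
          _ ≤ cc ^ 13 * ((cc ^ 2) ^ (StarAux.L (N : ℝ))) * Real.sqrt N :=
            mul_le_mul_of_nonneg_right hco (Real.sqrt_nonneg _)
          _ = cc ^ 13 * Real.sqrt N * ((cc ^ 2) ^ (StarAux.L (N : ℝ))) := by ring
  -- conclude
  refine ⟨cc ^ 16, ?_, ?_⟩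
  · calc (1 : ℝ) < 2 := one_lt_two
      _ ≤ cc := hcc2
      _ ≤ cc ^ 16 := le_self_pow₀ hcc1 (by norm_num)
  · intro N hN2
    have hm := hmain N (by omega)
    have hL1 : 1 ≤ StarAux.L ((N : ℕ) : ℝ) := by
      apply StarAux.L_pos
      have h2 : (2 : ℝ) ≤ (N : ℝ) := by exact_mod_cast hN2
      linarith
    have hls : logStar N = StarAux.L ((N : ℕ) : ℝ) := rfl
    rw [hls]
    have heq1 : cc ^ 13 * Real.sqrt N * ((cc ^ 2) ^ (StarAux.L ((N : ℕ) : ℝ)))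
        = Real.sqrt N * cc ^ (13 + 2 * StarAux.L ((N : ℕ) : ℝ)) := by
      rw [pow_add, pow_mul]; ring
    have hle : cc ^ (13 + 2 * StarAux.L ((N : ℕ) : ℝ)) ≤ cc ^ (16 * StarAux.L ((N : ℕ) : ℝ)) :=
      pow_le_pow_right₀ hcc1 (by omega)
    calc (T N : ℝ) ≤ cc ^ 13 * Real.sqrt N * ((cc ^ 2) ^ (StarAux.L ((N : ℕ) : ℝ))) := hm
      _ = Real.sqrt N * cc ^ (13 + 2 * StarAux.L ((N : ℕ) : ℝ)) := heq1
      _ ≤ Real.sqrt N * cc ^ (16 * StarAux.L ((N : ℕ) : ℝ)) :=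
        mul_le_mul_of_nonneg_left hle (Real.sqrt_nonneg _)
      _ = Real.sqrt N * (cc ^ 16) ^ (StarAux.L ((N : ℕ) : ℝ)) := by rw [← pow_mul]
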